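/- arXiv:1909.02901 — 3 statements merged into one kernel-verified Lean document; each statement's English description precedes it below -/
import Mathlib

section
/- Let d, N ≥ 1 and let f : {0,1}^d → ℤ satisfy |f(u) − f(v)| ≤ 1 whenever u and v differ in exactly one coordinate. Let F : {0,…,N}^d → ℚ be the multilinear interpolation of f. Then for all a, b ∈ {0,…,N}^d that differ by 1 in exactly one coordinate, |F(a) − F(b)| ≤ 1/N. -/
noncomputable section

/-- The multilinear interpolation of `f : {0,1}^d → ℤ` on the grid `{0,…,N}^d`:
`F(a) = Σ_{ε ∈ {0,1}^d} (Π_i w_i) · f(ε)` with `w_i = a_i/N` if `ε_i = 1` and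
`w_i = 1 − a_i/N` if `ε_i = 0`. -/
def interp (d N : ℕ) (f : (Fin d → Bool) → ℤ) (a : Fin d → ℕ) : ℚ :=
  ∑ ε : Fin d → Bool,
    (∏ i : Fin d, (if ε i then (a i : ℚ) / N else 1 - (a i : ℚ) / N)) * (f ε : ℚ)

/-- Two vertices of the discrete cube differ in exactly one coordinate. -/
def CubeAdj {d : ℕ} (u v : Fin d → Bool) : Prop :=
  ∃ j, u j ≠ v j ∧ ∀ k, k ≠ j → u k = v k

/-- Two grid points differ by `1` in exactly one coordinate. -/
def GridAdj {d : ℕ} (a b : Fin d → ℕ) : Prop :=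
  ∃ j, (a j = b j + 1 ∨ b j = a j + 1) ∧ ∀ k, k ≠ j → a k = b k

/-- **Statement 8.** If `f : {0,1}^d → ℤ` changes by at most `1` along each edge of the cube,
then its multilinear interpolation `F` on `{0,…,N}^d` changes by at most `1/N` along each
edge of the grid. -/
theorem interp_step_le {d N : ℕ} (hd : 1 ≤ d) (hN : 1 ≤ N) (f : (Fin d → Bool) → ℤ)
    (hf : ∀ u v : Fin d → Bool, CubeAdj u v → |f u - f v| ≤ 1)
    (a b : Fin d → ℕ) (ha : ∀ i, a i ≤ N) (hb : ∀ i, b i ≤ N) (hab : GridAdj a b) :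
    |interp d N f a - interp d N f b| ≤ 1 / N := by
  classical
  obtain ⟨j, hj, hk⟩ := hab
  have hN0 : (0 : ℚ) < N := by
    have : (0 : ℕ) < N := hN
    exact_mod_cast this
  set w : ℕ → Bool → ℚ := fun x e => if e then (x : ℚ) / N else 1 - (x : ℚ) / N with hw
  set P : (Fin d → Bool) → ℚ := fun ε => ∏ i ∈ Finset.univ.erase j, w (a i) (ε i) with hP
  have hle1 : ∀ i, (a i : ℚ) / N ≤ 1 := fun i => by
    rw [div_le_one hN0]; exact_mod_cast ha i
  have hPnn : ∀ ε, 0 ≤ P ε := by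
    intro ε
    apply Finset.prod_nonneg
    intro i _
    cases hε : ε i <;> simp only [hw, hε, if_true, if_false, Bool.false_eq_true]
    · linarith [hle1 i]
    · positivity
  have hPupd : ∀ ε e, P (Function.update ε j e) = P ε := by
    intro ε e
    apply Finset.prod_congr rfl
    intro i hi
    rw [Function.update_of_ne (Finset.ne_of_mem_erase hi)]
  set s : ℚ := (a j : ℚ) / N - (b j : ℚ) / N with hs
  set T : Finset (Fin d → Bool) := Finset.univ.filter (fun ε => ε j = true) with hT
  have hinterp : ∀ c : Fin d → ℕ,
      interp d N f c = ∑ ε : Fin d → Bool, (∏ i, w (c i) (ε i)) * (f ε : ℚ) := fun c => rfl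
  have key : interp d N f a - interp d N f b
      = s * ∑ ε : Fin d → Bool, (if ε j then (1 : ℚ) else -1) * (P ε * (f ε : ℚ)) := by
    rw [hinterp a, hinterp b, Finset.mul_sum, ← Finset.sum_sub_distrib]
    refine Finset.sum_congr rfl fun ε _ => ?_
    have hA : ∏ i, w (a i) (ε i) = w (a j) (ε j) * P ε :=
      (Finset.mul_prod_erase Finset.univ _ (Finset.mem_univ j)).symm
    have hB : ∏ i, w (b i) (ε i) = w (b j) (ε j) * P ε := by
      rw [← Finset.mul_prod_erase Finset.univ (fun i => w (b i) (ε i)) (Finset.mem_univ j)]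
      congr 1
      apply Finset.prod_congr rfl
      intro i hi
      rw [← hk i (Finset.ne_of_mem_erase hi)]
    rw [hA, hB]
    cases hε : ε j <;>
      simp only [hw, hs, hε, if_true, if_false, Bool.false_eq_true] <;> ring
  have hsum1 : ∑ ε ∈ T, P ε = 1 := by
    set W : Fin d → Bool → ℚ :=
      fun i e => if i = j then (if e then (1 : ℚ) else 0) else w (a i) e with hW
    have step1 : ∑ ε ∈ T, P ε = ∑ ε : Fin d → Bool, ∏ i, W i (ε i) := by
      rw [hT, Finset.sum_filter]
      refine Finset.sum_congr rfl fun ε _ => ?_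
      have : ∏ i, W i (ε i) = W j (ε j) * ∏ i ∈ Finset.univ.erase j, W i (ε i) :=
        (Finset.mul_prod_erase Finset.univ _ (Finset.mem_univ j)).symm
      rw [this]
      have hrest : ∏ i ∈ Finset.univ.erase j, W i (ε i) = P ε := by
        apply Finset.prod_congr rfl
        intro i hi
        simp only [hW, if_neg (Finset.ne_of_mem_erase hi)]
      rw [hrest]
      cases hε : ε j <;> simp [hW, hε]
    rw [step1, ← Fintype.prod_sum W]
    apply Finset.prod_eq_one
    intro i _
    rw [Fintype.sum_bool]
    by_cases hij : i = j
    · simp [hW, hij]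
    · simp only [hW, hw, if_neg hij, if_true, if_false, Bool.false_eq_true]
      ring
  have habs : |∑ ε : Fin d → Bool, (if ε j then (1 : ℚ) else -1) * (P ε * (f ε : ℚ))| ≤ 1 := by
    have h1 : ∑ ε ∈ T, (if ε j then (1 : ℚ) else -1) * (P ε * (f ε : ℚ))
        = ∑ ε ∈ T, P ε * (f ε : ℚ) := by
      refine Finset.sum_congr rfl fun ε hε => ?_
      have : ε j = true := (Finset.mem_filter.mp hε).2
      rw [this, if_pos rfl, one_mul]
    have h2 : ∑ ε ∈ Finset.univ.filter (fun ε : Fin d → Bool => ¬ ε j = true),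
          (if ε j then (1 : ℚ) else -1) * (P ε * (f ε : ℚ))
        = ∑ ε ∈ T, -(P ε * ((f (Function.update ε j false)) : ℚ)) := by
      refine Finset.sum_nbij' (fun ε => Function.update ε j true)
        (fun ε => Function.update ε j false) ?_ ?_ ?_ ?_ ?_
      · intro ε hε
        simp [hT, Function.update_self]
      · intro ε hε
        simp [Function.update_self]
      · intro ε hε
        have hεj : ε j = false := by
          have := (Finset.mem_filter.mp hε).2
          simpa using this
        show Function.update (Function.update ε j true) j false = ε
        rw [Function.update_idem, ← hεj, Function.update_eq_self]
      · intro ε hε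
        have hεj : ε j = true := (Finset.mem_filter.mp hε).2
        show Function.update (Function.update ε j false) j true = ε
        rw [Function.update_idem, ← hεj, Function.update_eq_self]
      · intro ε hε
        have hεj : ε j = false := by
          have := (Finset.mem_filter.mp hε).2
          simpa using this
        have h3 : Function.update (Function.update ε j true) j false = ε := by
          rw [Function.update_idem, ← hεj, Function.update_eq_self]
        show (if ε j = true then (1 : ℚ) else -1) * (P ε * (f ε : ℚ))
          = -(P (Function.update ε j true) *
              ((f (Function.update (Function.update ε j true) j false)) : ℚ))
        rw [hεj, hPupd, h3]
        simp [Bool.false_eq_true]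
    have hsplit : (∑ ε : Fin d → Bool, (if ε j then (1 : ℚ) else -1) * (P ε * (f ε : ℚ)))
        = ∑ ε ∈ T, P ε * ((f ε : ℚ) - (f (Function.update ε j false) : ℚ)) := by
      rw [← Finset.sum_filter_add_sum_filter_not Finset.univ (fun ε : Fin d → Bool => ε j = true),
        ← hT, h1, h2, ← Finset.sum_add_distrib]
      refine Finset.sum_congr rfl fun ε _ => ?_
      ring
    rw [hsplit]
    calc |∑ ε ∈ T, P ε * ((f ε : ℚ) - (f (Function.update ε j false) : ℚ))|
        ≤ ∑ ε ∈ T, |P ε * ((f ε : ℚ) - (f (Function.update ε j false) : ℚ))| :=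
          Finset.abs_sum_le_sum_abs _ _
      _ ≤ ∑ ε ∈ T, P ε := by
          apply Finset.sum_le_sum
          intro ε hε
          rw [abs_mul, abs_of_nonneg (hPnn ε)]
          have hεj : ε j = true := (Finset.mem_filter.mp hε).2
          have hadj : CubeAdj ε (Function.update ε j false) := by
            refine ⟨j, ?_, fun k hk => (Function.update_of_ne hk _ _).symm⟩
            rw [Function.update_self, hεj]
            simp
          have hfd : |(f ε : ℚ) - (f (Function.update ε j false) : ℚ)| ≤ 1 := by
            have := hf ε (Function.update ε j false) hadj
            exact_mod_cast this
          calc P ε * |(f ε : ℚ) - (f (Function.update ε j false) : ℚ)|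
              ≤ P ε * 1 := mul_le_mul_of_nonneg_left hfd (hPnn ε)
            _ = P ε := mul_one _
      _ = 1 := hsum1
  have hsabs : |s| = 1 / N := by
    rcases hj with h | h
    · have : s = 1 / N := by rw [hs, h]; push_cast; ring
      rw [this, abs_of_nonneg (by positivity)]
    · have : s = -(1 / N) := by rw [hs, h]; push_cast; ring
      rw [this, abs_neg, abs_of_nonneg (by positivity)]
  rw [key, abs_mul, hsabs]
  calc 1 / (N : ℚ) * |∑ ε : Fin d → Bool, (if ε j then (1 : ℚ) else -1) * (P ε * (f ε : ℚ))|
      ≤ 1 / N * 1 := mul_le_mul_of_nonneg_left habs (by positivity)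
    _ = 1 / N := mul_one _
end
end

section
/- Let d, N ≥ 1, let f : {0,1}^d → ℤ satisfy |f(u) − f(v)| ≤ 1 whenever u and v differ in exactly one coordinate, and let F : {0,…,N}^d → ℚ be the multilinear interpolation of f. Then: (1) for all a, b ∈ {0,…,N}^d differing by 1 in exactly one coordinate, |⌊F(a)⌋ − ⌊F(b)⌋| ≤ 1; and (2) if N ≥ d and a, b lie in a common unit subcube of the grid (i.e., there exists c ∈ {0,…,N−1}^d with c_i ≤ a_i ≤ c_i + 1 and c_i ≤ b_i ≤ c_i + 1 for all i), then |⌊F(a)⌋ − ⌊F(b)⌋| ≤ 1; in particular, ⌊F⌋ takes at most two (consecutive) integer values on each unit subcube. -/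
noncomputable section

/-- weight of coordinate `i` at bit `t`. -/
def Wt (N : ℕ) {d : ℕ} (c : Fin d → ℕ) (i : Fin d) (t : Bool) : ℚ :=
  if t then (c i : ℚ) / N else 1 - (c i : ℚ) / N

lemma interp_eq (d N : ℕ) (f : (Fin d → Bool) → ℤ) (a : Fin d → ℕ) :
    interp d N f a = ∑ ε : Fin d → Bool, (∏ i, Wt N a i (ε i)) * (f ε : ℚ) := rfl

section aux
variable {ι : Type*} [Fintype ι] [DecidableEq ι]

lemma sum_prod_weights (w : ι → Bool → ℚ) :
    (∑ ε : ι → Bool, ∏ i, w i (ε i)) = ∏ i, (w i true + w i false) := by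
  have h : ∀ i, w i true + w i false = ∑ b : Bool, w i b := by
    intro i; rw [Fintype.sum_bool]
  simp_rw [h, Finset.prod_univ_sum, Fintype.piFinset_univ]

lemma abs_weighted_sum_le (w : ι → Bool → ℚ) (hw0 : ∀ i b, 0 ≤ w i b)
    (hw1 : ∀ i, w i true + w i false = 1)
    (g : (ι → Bool) → ℚ) (hg : ∀ ε, |g ε| ≤ 1) :
    |∑ ε : ι → Bool, (∏ i, w i (ε i)) * g ε| ≤ 1 := by
  calc |∑ ε : ι → Bool, (∏ i, w i (ε i)) * g ε|
      ≤ ∑ ε : ι → Bool, |(∏ i, w i (ε i)) * g ε| := Finset.abs_sum_le_sum_abs _ _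
    _ ≤ ∑ ε : ι → Bool, ∏ i, w i (ε i) := by
        apply Finset.sum_le_sum
        intro ε _
        have hp : (0:ℚ) ≤ ∏ i, w i (ε i) := Finset.prod_nonneg fun i _ => hw0 i _
        rw [abs_mul, abs_of_nonneg hp]
        calc (∏ i, w i (ε i)) * |g ε| ≤ (∏ i, w i (ε i)) * 1 :=
              mul_le_mul_of_nonneg_left (hg ε) hp
          _ = _ := mul_one _
    _ = 1 := by rw [sum_prod_weights]; simp [hw1]

end aux

lemma interp_one_coord {d N : ℕ} (hN : 1 ≤ N) (f : (Fin d → Bool) → ℤ)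
    (hf : ∀ u v : Fin d → Bool, CubeAdj u v → |f u - f v| ≤ 1)
    (a b : Fin d → ℕ) (ha : ∀ i, a i ≤ N) (hb : ∀ i, b i ≤ N)
    (j : Fin d) (hab : ∀ k, k ≠ j → a k = b k) :
    |interp d N f a - interp d N f b| ≤ |(a j : ℚ) - (b j : ℚ)| / N := by
  classical
  have hN0 : (0:ℚ) < N := by exact_mod_cast hN
  set δ : ℚ := ((a j : ℚ) - b j) / N with hδ
  -- extension map
  set ext : ({k : Fin d // k ≠ j} → Bool) → Bool → (Fin d → Bool) :=
    fun η t => (Equiv.piSplitAt j (fun _ => Bool)).symm (t, η) with hext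
  have hext_j : ∀ η t, ext η t j = t := by
    intro η t; simp [hext, Equiv.piSplitAt_symm_apply]
  have hext_ne : ∀ η t (k : Fin d) (h : k ≠ j), ext η t k = η ⟨k, h⟩ := by
    intro η t k h; simp [hext, Equiv.piSplitAt_symm_apply, h]
  -- products split at j
  have hsplit : ∀ (c : Fin d → ℕ) (ε : Fin d → Bool),
      (∏ i, Wt N c i (ε i)) = Wt N c j (ε j) * ∏ i : {k : Fin d // k ≠ j}, Wt N c i (ε i) := by
    intro c ε
    rw [← Finset.mul_prod_erase Finset.univ _ (Finset.mem_univ j)]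
    congr 1
    exact Finset.prod_subtype _ (by simp) _
  -- the reduced weight
  set Q : ({k : Fin d // k ≠ j} → Bool) → ℚ :=
    fun η => ∏ i : {k : Fin d // k ≠ j}, Wt N a i (η i) with hQ
  have hWeq : ∀ (i : {k : Fin d // k ≠ j}) (t : Bool), Wt N a i t = Wt N b i t := by
    intro i t; unfold Wt; rw [hab i i.2]
  -- the main identity
  have main : interp d N f a - interp d N f b
      = δ * ∑ η : {k : Fin d // k ≠ j} → Bool,
          Q η * (((f (ext η true) : ℚ)) - (f (ext η false) : ℚ)) := by
    rw [interp_eq, interp_eq, ← Finset.sum_sub_distrib]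
    have step : ∀ ε : Fin d → Bool,
        (∏ i, Wt N a i (ε i)) * (f ε : ℚ) - (∏ i, Wt N b i (ε i)) * (f ε : ℚ)
        = (if ε j then δ else -δ) *
            ((∏ i : {k : Fin d // k ≠ j}, Wt N a i (ε i)) * (f ε : ℚ)) := by
      intro ε
      rw [hsplit a ε, hsplit b ε]
      have hprod : (∏ i : {k : Fin d // k ≠ j}, Wt N b i (ε i))
          = ∏ i : {k : Fin d // k ≠ j}, Wt N a i (ε i) :=
        Finset.prod_congr rfl fun i _ => (hWeq i _).symm
      rw [hprod]
      have hWdiff : Wt N a j (ε j) - Wt N b j (ε j) = if ε j then δ else -δ := by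
        unfold Wt; cases ε j <;> simp [hδ] <;> ring
      rw [← sub_mul, ← mul_assoc, ← sub_mul, hWdiff]
    simp_rw [step]
    -- reindex via the split equivalence
    rw [← Equiv.sum_comp (Equiv.piSplitAt j (fun _ => Bool)).symm
      (fun ε => (if ε j then δ else -δ) *
        ((∏ i : {k : Fin d // k ≠ j}, Wt N a i (ε i)) * (f ε : ℚ)))]
    rw [Fintype.sum_prod_type, Fintype.sum_bool]
    have e1 : ∀ (t : Bool) (η : {k : Fin d // k ≠ j} → Bool),
        (Equiv.piSplitAt j (fun _ => Bool)).symm (t, η) = ext η t := fun _ _ => rfl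
    have e2 : ∀ (t : Bool) (η : {k : Fin d // k ≠ j} → Bool),
        (∏ i : {k : Fin d // k ≠ j}, Wt N a i (ext η t i)) = Q η := by
      intro t η
      exact Finset.prod_congr rfl fun i _ => by rw [hext_ne η t i i.2]
    simp only [e1]
    rw [Finset.mul_sum, ← Finset.sum_add_distrib]
    apply Finset.sum_congr rfl
    intro η _
    rw [hext_j η true, hext_j η false, e2 true η, e2 false η]
    norm_num
    ring
  rw [main, abs_mul]
  have hS : |∑ η : {k : Fin d // k ≠ j} → Bool,
      Q η * (((f (ext η true) : ℚ)) - (f (ext η false) : ℚ))| ≤ 1 := by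
    simp only [hQ]
    apply abs_weighted_sum_le (w := fun (i : {k : Fin d // k ≠ j}) t => Wt N a i t)
      (g := fun η => ((f (ext η true) : ℚ)) - (f (ext η false) : ℚ))
    · intro i t
      have hle : (a (i : Fin d) : ℚ) ≤ N := by exact_mod_cast ha (i : Fin d)
      have hdiv : (a (i : Fin d) : ℚ) / N ≤ 1 := by rw [div_le_one hN0]; exact hle
      cases t
      · show (0:ℚ) ≤ 1 - (a (i : Fin d) : ℚ) / N
        linarith
      · show (0:ℚ) ≤ (a (i : Fin d) : ℚ) / N
        positivity
    · intro i
      show (a (i : Fin d) : ℚ) / N + (1 - (a (i : Fin d) : ℚ) / N) = 1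
      ring
    · intro η
      have hadj : CubeAdj (ext η true) (ext η false) := by
        refine ⟨j, ?_, ?_⟩
        · rw [hext_j, hext_j]; simp
        · intro k hk; rw [hext_ne η true k hk, hext_ne η false k hk]
      have := hf _ _ hadj
      have : |((f (ext η true) - f (ext η false) : ℤ) : ℚ)| ≤ 1 := by
        rw [← Int.cast_abs]; exact_mod_cast this
      rwa [Int.cast_sub] at this
  have hδabs : |δ| = |(a j : ℚ) - (b j : ℚ)| / N := by
    rw [hδ, abs_div, abs_of_pos hN0]
  calc |δ| * |∑ η : {k : Fin d // k ≠ j} → Bool,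
      Q η * (((f (ext η true) : ℚ)) - (f (ext η false) : ℚ))|
      ≤ |δ| * 1 := mul_le_mul_of_nonneg_left hS (abs_nonneg _)
    _ = |(a j : ℚ) - (b j : ℚ)| / N := by rw [mul_one, hδabs]

lemma interp_subcube {d N : ℕ} (hN : 1 ≤ N) (f : (Fin d → Bool) → ℤ)
    (hf : ∀ u v : Fin d → Bool, CubeAdj u v → |f u - f v| ≤ 1)
    (a b c : Fin d → ℕ) (hc : ∀ i, c i + 1 ≤ N)
    (hac : ∀ i, c i ≤ a i ∧ a i ≤ c i + 1) (hbc : ∀ i, c i ≤ b i ∧ b i ≤ c i + 1) :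
    |interp d N f a - interp d N f b| ≤ (d : ℚ) / N := by
  classical
  have hN0 : (0:ℚ) < N := by exact_mod_cast hN
  set m : ℕ → Fin d → ℕ := fun t i => if (i : ℕ) < t then b i else a i with hm
  have hm0 : m 0 = a := by funext i; simp [hm]
  have hmd : m d = b := by funext i; simp [hm, i.isLt]
  have hbound : ∀ t i, m t i ≤ N := by
    intro t i; simp only [hm]; split
    · exact le_trans (hbc i).2 (hc i)
    · exact le_trans (hac i).2 (hc i)
  have key : ∀ t, t < d → |interp d N f (m (t+1)) - interp d N f (m t)| ≤ 1 / N := by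
    intro t ht
    have hcoord : ∀ k, k ≠ (⟨t, ht⟩ : Fin d) → m (t+1) k = m t k := by
      intro k hk
      have hkt : (k : ℕ) ≠ t := fun h => hk (Fin.ext h)
      simp only [hm]
      rcases Nat.lt_or_ge (k : ℕ) t with h | h
      · simp [h, Nat.lt_succ_of_lt h]
      · have h1 : ¬ (k : ℕ) < t := not_lt.mpr h
        have h2 : ¬ (k : ℕ) < t + 1 := by omega
        simp [h1, h2]
    have h1 := interp_one_coord hN f hf (m (t+1)) (m t) (hbound _) (hbound _) ⟨t, ht⟩ hcoord
    refine le_trans h1 ?_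
    have hjv1 : m (t+1) (⟨t, ht⟩ : Fin d) = b ⟨t, ht⟩ := by simp [hm]
    have hjv2 : m t (⟨t, ht⟩ : Fin d) = a ⟨t, ht⟩ := by simp [hm]
    rw [hjv1, hjv2]
    have hn1 : b ⟨t, ht⟩ ≤ a ⟨t, ht⟩ + 1 := by
      have := hac (⟨t, ht⟩ : Fin d); have := hbc (⟨t, ht⟩ : Fin d); omega
    have hn2 : a ⟨t, ht⟩ ≤ b ⟨t, ht⟩ + 1 := by
      have := hac (⟨t, ht⟩ : Fin d); have := hbc (⟨t, ht⟩ : Fin d); omega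
    have hc1 : (b ⟨t, ht⟩ : ℚ) ≤ (a ⟨t, ht⟩ : ℚ) + 1 := by exact_mod_cast hn1
    have hc2 : (a ⟨t, ht⟩ : ℚ) ≤ (b ⟨t, ht⟩ : ℚ) + 1 := by exact_mod_cast hn2
    have habs : |(b ⟨t, ht⟩ : ℚ) - (a ⟨t, ht⟩ : ℚ)| ≤ 1 := by
      rw [abs_le]; constructor <;> linarith
    gcongr
  have tele : interp d N f b - interp d N f a
      = ∑ t ∈ Finset.range d, (interp d N f (m (t+1)) - interp d N f (m t)) := by
    rw [Finset.sum_range_sub (fun t => interp d N f (m t)), hm0, hmd]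
  rw [abs_sub_comm, tele]
  calc |∑ t ∈ Finset.range d, (interp d N f (m (t+1)) - interp d N f (m t))|
      ≤ ∑ t ∈ Finset.range d, |interp d N f (m (t+1)) - interp d N f (m t)| :=
        Finset.abs_sum_le_sum_abs _ _
    _ ≤ ∑ _t ∈ Finset.range d, (1 / N : ℚ) :=
        Finset.sum_le_sum fun t ht => key t (Finset.mem_range.mp ht)
    _ = (d : ℚ) / N := by
        rw [Finset.sum_const, Finset.card_range, nsmul_eq_mul, mul_one_div]

lemma floor_diff_le {x y : ℚ} (h : |x - y| ≤ 1) : |⌊x⌋ - ⌊y⌋| ≤ 1 := by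
  rw [abs_le] at h ⊢
  have h1 : x ≤ y + 1 := by linarith [h.2]
  have h2 : y ≤ x + 1 := by linarith [h.1]
  have f1 : ⌊x⌋ ≤ ⌊y⌋ + 1 := by
    have := Int.floor_mono h1; rwa [Int.floor_add_one] at this
  have f2 : ⌊y⌋ ≤ ⌊x⌋ + 1 := by
    have := Int.floor_mono h2; rwa [Int.floor_add_one] at this
  omega

/-- **Statement 9.** With `F` the multilinear interpolation of `f`:
(1) `⌊F⌋` changes by at most `1` along edges of the grid; (2) if `N ≥ d`, `⌊F⌋` varies by at
most `1` on every unit subcube of the grid; in particular `⌊F⌋` takes at most two consecutive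
integer values on each unit subcube. -/
theorem floor_interp_estimates {d N : ℕ} (hd : 1 ≤ d) (hN : 1 ≤ N)
    (f : (Fin d → Bool) → ℤ)
    (hf : ∀ u v : Fin d → Bool, CubeAdj u v → |f u - f v| ≤ 1) :
    (∀ a b : Fin d → ℕ, (∀ i, a i ≤ N) → (∀ i, b i ≤ N) → GridAdj a b →
      |⌊interp d N f a⌋ - ⌊interp d N f b⌋| ≤ 1) ∧
    (d ≤ N → ∀ a b c : Fin d → ℕ, (∀ i, c i + 1 ≤ N) →
      (∀ i, c i ≤ a i ∧ a i ≤ c i + 1) → (∀ i, c i ≤ b i ∧ b i ≤ c i + 1) →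
      |⌊interp d N f a⌋ - ⌊interp d N f b⌋| ≤ 1) ∧
    (d ≤ N → ∀ c : Fin d → ℕ, (∀ i, c i + 1 ≤ N) →
      ∃ m : ℤ, ∀ a : Fin d → ℕ, (∀ i, c i ≤ a i ∧ a i ≤ c i + 1) →
        ⌊interp d N f a⌋ = m ∨ ⌊interp d N f a⌋ = m + 1) := by
  classical
  have hN0 : (0:ℚ) < N := by exact_mod_cast hN
  have hsub : ∀ (hdN : d ≤ N) (a b c : Fin d → ℕ), (∀ i, c i + 1 ≤ N) →
      (∀ i, c i ≤ a i ∧ a i ≤ c i + 1) → (∀ i, c i ≤ b i ∧ b i ≤ c i + 1) →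
      |⌊interp d N f a⌋ - ⌊interp d N f b⌋| ≤ 1 := by
    intro hdN a b c hc hac hbc
    apply floor_diff_le
    refine le_trans (interp_subcube hN f hf a b c hc hac hbc) ?_
    rw [div_le_one hN0]
    exact_mod_cast hdN
  refine ⟨?_, hsub, ?_⟩
  · rintro a b ha hb ⟨j, hj, hk⟩
    apply floor_diff_le
    have h1 := interp_one_coord hN f hf a b ha hb j hk
    refine le_trans h1 ?_
    have habs : |(a j : ℚ) - (b j : ℚ)| = 1 := by
      rcases hj with h | h
      · have : (a j : ℚ) = (b j : ℚ) + 1 := by exact_mod_cast h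
        rw [this]; simp
      · have : (b j : ℚ) = (a j : ℚ) + 1 := by exact_mod_cast h
        rw [this]; simp [abs_of_nonpos]
    rw [habs, div_le_one hN0]
    exact_mod_cast hN
  · intro hdN c hc
    obtain ⟨ε₀, -, hmin⟩ := Finset.exists_min_image Finset.univ
      (fun ε : Fin d → Bool => ⌊interp d N f (fun i => c i + if ε i then 1 else 0)⌋)
      ⟨fun _ => false, Finset.mem_univ _⟩
    set a₀ : Fin d → ℕ := fun i => c i + if ε₀ i then 1 else 0 with ha₀
    refine ⟨⌊interp d N f a₀⌋, ?_⟩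
    intro a hac
    have ha₀sub : ∀ i, c i ≤ a₀ i ∧ a₀ i ≤ c i + 1 := by
      intro i
      simp only [ha₀]
      split <;> omega
    have hrep : (fun i => c i + if a i = c i + 1 then 1 else 0) = a := by
      funext i
      by_cases h : a i = c i + 1
      · simp [h]
      · have := hac i
        rw [if_neg h]
        omega
    have hlow : ⌊interp d N f a₀⌋ ≤ ⌊interp d N f a⌋ := by
      have h := hmin (fun i => decide (a i = c i + 1)) (Finset.mem_univ _)
      simp only [decide_eq_true_eq] at h
      rwa [hrep] at h
    have hclose : |⌊interp d N f a⌋ - ⌊interp d N f a₀⌋| ≤ 1 :=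
      hsub hdN a a₀ c hc hac ha₀sub
    rw [abs_le] at hclose
    omega

end
end

section
/- Let d ≥ 1 and let f : {0,1}^d → ℤ satisfy |f(u) − f(v)| ≤ 1 whenever u and v differ in exactly one coordinate. Let F : {0,…,d}^d → ℚ be the multilinear interpolation of f taken with N = d, and define γ : {0,…,d}^d × {0,…,d} → ℚ by γ(a, k) = (1 − k/d)·F(a) + (k/d)·f(ā), where ā ∈ {0,1}^d is given by ā_i = 0 if a_i = 0 and ā_i = 1 if a_i ≥ 1. Then any two points of the (d+1)-dimensional grid {0,…,d}^{d+1} that differ by 1 in exactly one coordinate have γ-values differing by at most 1 in absolute value. -/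
noncomputable section

/-- `ā ∈ {0,1}^d`, where `ā_i = 0` if `a_i = 0` and `ā_i = 1` if `a_i ≥ 1`. -/
def barMap {d : ℕ} (a : Fin d → ℕ) : Fin d → Bool := fun i => decide (1 ≤ a i)

/-- The labeling `γ` of the prism grid `{0,…,d}^d × {0,…,d}`: the bottom face (`k = 0`)
is the multilinear interpolation `F` (with `N = d`), the top face (`k = d`) is `a ↦ f(ā)`,
linearly interpolated in `d` equal steps along each vertical line. -/
def gammaLabel (d : ℕ) (f : (Fin d → Bool) → ℤ) (a : Fin d → ℕ) (k : ℕ) : ℚ :=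
  (1 - (k : ℚ) / d) * interp d d f a + ((k : ℚ) / d) * (f (barMap a) : ℚ)

open Finset

namespace GammaAux

variable {d : ℕ}

/-- weight of a vertex -/
def wt (d N : ℕ) (a : Fin d → ℕ) (ε : Fin d → Bool) : ℚ :=
  ∏ i : Fin d, (if ε i then (a i : ℚ) / N else 1 - (a i : ℚ) / N)

lemma wfac_nonneg {N : ℕ} (hN : 0 < N) {a : Fin d → ℕ} (ha : ∀ i, a i ≤ N)
    (i : Fin d) (b : Bool) :
    0 ≤ (if b then (a i : ℚ) / N else 1 - (a i : ℚ) / N) := by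
  have h0 : (0:ℚ) ≤ (a i : ℚ) / N := by positivity
  have h1 : (a i : ℚ) / N ≤ 1 := by
    rw [div_le_one (by exact_mod_cast hN)]
    exact_mod_cast ha i
  cases b <;> simp <;> linarith

lemma wt_nonneg {N : ℕ} (hN : 0 < N) {a : Fin d → ℕ} (ha : ∀ i, a i ≤ N)
    (ε : Fin d → Bool) : 0 ≤ wt d N a ε :=
  Finset.prod_nonneg fun i _ => wfac_nonneg hN ha i (ε i)

lemma wt_sum (N : ℕ) (a : Fin d → ℕ) : ∑ ε : Fin d → Bool, wt d N a ε = 1 := by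
  have h := Finset.prod_univ_sum (t := fun _ : Fin d => (Finset.univ : Finset Bool))
    (f := fun i b => if b then (a i : ℚ) / N else 1 - (a i : ℚ) / N)
  rw [Fintype.piFinset_univ] at h
  have : ∑ ε : Fin d → Bool, wt d N a ε
      = ∏ i : Fin d, ∑ b : Bool, (if b then (a i : ℚ) / N else 1 - (a i : ℚ) / N) := by
    rw [h]; rfl
  rw [this]
  exact Finset.prod_eq_one fun i _ => by rw [Fintype.sum_bool]; simp

lemma interp_eq (N : ℕ) (f : (Fin d → Bool) → ℤ) (a : Fin d → ℕ) :
    interp d N f a = ∑ ε : Fin d → Bool, wt d N a ε * (f ε : ℚ) := rfl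

/-- convex combination bound -/
lemma conv_bound {α : Type*} (s : Finset α) (w g : α → ℚ) (c M : ℚ)
    (hw : ∀ i ∈ s, 0 ≤ w i) (hsum : ∑ i ∈ s, w i = 1)
    (hg : ∀ i ∈ s, |g i - c| ≤ M) :
    |(∑ i ∈ s, w i * g i) - c| ≤ M := by
  have key : (∑ i ∈ s, w i * g i) - c = ∑ i ∈ s, w i * (g i - c) := by
    rw [Finset.sum_congr rfl (fun i _ => mul_sub (w i) (g i) c),
      Finset.sum_sub_distrib, ← Finset.sum_mul, hsum, one_mul]
  rw [key]
  calc |∑ i ∈ s, w i * (g i - c)| ≤ ∑ i ∈ s, |w i * (g i - c)| :=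
        Finset.abs_sum_le_sum_abs _ _
    _ ≤ ∑ i ∈ s, w i * M := by
        refine Finset.sum_le_sum fun i hi => ?_
        rw [abs_mul, abs_of_nonneg (hw i hi)]
        exact mul_le_mul_of_nonneg_left (hg i hi) (hw i hi)
    _ = M := by rw [← Finset.sum_mul, hsum, one_mul]

lemma hamming_bound (f : (Fin d → Bool) → ℤ)
    (hf : ∀ u v : (Fin d → Bool), CubeAdj u v → |f u - f v| ≤ 1) :
    ∀ n : ℕ, ∀ u v : Fin d → Bool,
      (Finset.univ.filter fun i => u i ≠ v i).card ≤ n → |f u - f v| ≤ n := by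
  intro n
  induction n with
  | zero =>
    intro u v h
    have huv : u = v := by
      funext i
      by_contra hne
      have : i ∈ Finset.univ.filter fun i => u i ≠ v i := by simp [hne]
      have := Finset.card_pos.mpr ⟨i, this⟩
      omega
    simp [huv]
  | succ n ih =>
    intro u v h
    by_cases huv : u = v
    · simp [huv]; positivity
    · obtain ⟨j, hj⟩ : ∃ j, u j ≠ v j := Function.ne_iff.mp huv
      set w := Function.update u j (v j) with hw
      have h1 : CubeAdj u w := by
        refine ⟨j, ?_, fun k hk => ?_⟩
        · simp [hw, Function.update_self]; exact hj
        · simp [hw, Function.update_of_ne hk]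
      have hsub : (Finset.univ.filter fun i => w i ≠ v i)
          ⊆ (Finset.univ.filter fun i => u i ≠ v i).erase j := by
        intro i hi
        simp only [Finset.mem_filter, Finset.mem_univ, true_and] at hi
        rcases eq_or_ne i j with rfl | hij
        · exact absurd (by simp [hw]) hi
        · simp only [Finset.mem_erase, Finset.mem_filter, Finset.mem_univ, true_and]
          refine ⟨hij, ?_⟩
          rwa [hw, Function.update_of_ne hij] at hi
      have hjmem : j ∈ Finset.univ.filter fun i => u i ≠ v i := by simp [hj]
      have hcard : (Finset.univ.filter fun i => w i ≠ v i).card ≤ n := by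
        have := Finset.card_le_card hsub
        have := Finset.card_erase_of_mem hjmem
        omega
      calc |f u - f v| ≤ |f u - f w| + |f w - f v| := abs_sub_le _ _ _
        _ ≤ 1 + (n : ℤ) := add_le_add (hf u w h1) (ih w v hcard)
        _ = ((n + 1 : ℕ) : ℤ) := by push_cast; ring

lemma interp_sub_bar (hd : 1 ≤ d) (f : (Fin d → Bool) → ℤ)
    (hf : ∀ u v : (Fin d → Bool), CubeAdj u v → |f u - f v| ≤ 1)
    (a : Fin d → ℕ) (ha : ∀ i, a i ≤ d) :
    |interp d d f a - (f (barMap a) : ℚ)| ≤ (d : ℚ) := by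
  rw [interp_eq]
  refine conv_bound _ _ _ _ _ (fun ε _ => wt_nonneg hd ha ε) (wt_sum d a) (fun ε _ => ?_)
  have h := hamming_bound f hf d ε (barMap a)
    ((Finset.card_filter_le _ _).trans (by simp))
  rw [← Int.cast_sub, ← Int.cast_abs]
  exact_mod_cast h

lemma bar_bound (f : (Fin d → Bool) → ℤ)
    (hf : ∀ u v : (Fin d → Bool), CubeAdj u v → |f u - f v| ≤ 1)
    {a b : Fin d → ℕ} (j : Fin d) (hother : ∀ k, k ≠ j → a k = b k) :
    |f (barMap a) - f (barMap b)| ≤ 1 := by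
  have h := hamming_bound f hf 1 (barMap a) (barMap b) ?_
  · exact_mod_cast h
  · have hsub : (Finset.univ.filter fun i => barMap a i ≠ barMap b i) ⊆ {j} := by
      intro i hi
      simp only [Finset.mem_filter, Finset.mem_univ, true_and] at hi
      rcases eq_or_ne i j with rfl | hij
      · simp
      · exact absurd (by simp [barMap, hother i hij]) hi
    exact (Finset.card_le_card hsub).trans (by simp)

lemma interp_lipschitz (hd : 1 ≤ d) (f : (Fin d → Bool) → ℤ)
    (hf : ∀ u v : (Fin d → Bool), CubeAdj u v → |f u - f v| ≤ 1)
    {a b : Fin d → ℕ} (ha : ∀ i, a i ≤ d) (hb : ∀ i, b i ≤ d) (j : Fin d)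
    (hj : a j = b j + 1) (hother : ∀ k, k ≠ j → a k = b k) :
    |interp d d f a - interp d d f b| ≤ 1 := by
  have hd0 : (d : ℚ) ≠ 0 := by exact_mod_cast Nat.one_le_iff_ne_zero.mp hd
  set Q : (Fin d → Bool) → ℚ :=
    fun ε => ∏ i ∈ Finset.univ.erase j, (if ε i then (a i : ℚ) / d else 1 - (a i : ℚ) / d)
    with hQ
  have hQb : ∀ ε, (∏ i ∈ Finset.univ.erase j,
      (if ε i then (b i : ℚ) / d else 1 - (b i : ℚ) / d)) = Q ε := by
    intro ε
    refine Finset.prod_congr rfl fun i hi => ?_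
    rw [hother i (Finset.mem_erase.mp hi).1]
  have hQflip : ∀ ε (c : Bool), Q (Function.update ε j c) = Q ε := by
    intro ε c
    refine Finset.prod_congr rfl fun i hi => ?_
    rw [Function.update_of_ne (Finset.mem_erase.mp hi).1]
  have hQnn : ∀ ε, 0 ≤ Q ε :=
    fun ε => Finset.prod_nonneg fun i _ => wfac_nonneg hd ha i (ε i)
  -- the weight difference
  have hwd : ∀ ε : Fin d → Bool,
      wt d d a ε - wt d d b ε = (if ε j then (1:ℚ)/d else -(1/d)) * Q ε := by
    intro ε
    have h1 : wt d d a ε = (if ε j then (a j : ℚ) / d else 1 - (a j : ℚ) / d) * Q ε :=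
      (Finset.mul_prod_erase _ _ (Finset.mem_univ j)).symm
    have h2 : wt d d b ε = (if ε j then (b j : ℚ) / d else 1 - (b j : ℚ) / d) * Q ε := by
      rw [← hQb ε]
      exact (Finset.mul_prod_erase _ _ (Finset.mem_univ j)).symm
    rw [h1, h2]
    have haj : (a j : ℚ) = (b j : ℚ) + 1 := by exact_mod_cast hj
    cases hε : ε j <;> simp [haj] <;> ring
  -- sum of Q over T is 1
  set T := Finset.univ.filter (fun ε : Fin d → Bool => ε j = true) with hT
  have hQsum : ∑ ε ∈ T, Q ε = 1 := by
    have h := wt_sum (d := d) d (Function.update a j d)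
    have heq : ∀ ε : Fin d → Bool,
        wt d d (Function.update a j d) ε = if ε j = true then Q ε else 0 := by
      intro ε
      have h1 : wt d d (Function.update a j d) ε
          = (if ε j then ((Function.update a j d j : ℕ) : ℚ) / d
              else 1 - ((Function.update a j d j : ℕ) : ℚ) / d) *
            ∏ i ∈ Finset.univ.erase j,
              (if ε i then ((Function.update a j d i : ℕ) : ℚ) / d
                else 1 - ((Function.update a j d i : ℕ) : ℚ) / d) :=
        (Finset.mul_prod_erase _ _ (Finset.mem_univ j)).symm
      rw [h1]
      have hP : (∏ i ∈ Finset.univ.erase j,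
          (if ε i then ((Function.update a j d i : ℕ) : ℚ) / d
            else 1 - ((Function.update a j d i : ℕ) : ℚ) / d)) = Q ε := by
        refine Finset.prod_congr rfl fun i hi => ?_
        rw [Function.update_of_ne (Finset.mem_erase.mp hi).1]
      rw [hP, Function.update_self]
      cases hε : ε j <;> simp [hd0]
    rw [Finset.sum_congr rfl (fun ε _ => heq ε), ← Finset.sum_filter] at h
    exact h
  -- main difference identity
  have hdiff : interp d d f a - interp d d f b
      = (1/d) * ∑ ε ∈ T, Q ε * ((f ε : ℚ) - (f (Function.update ε j false) : ℚ)) := by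
    rw [interp_eq, interp_eq, ← Finset.sum_sub_distrib]
    have step1 : ∀ ε : Fin d → Bool,
        wt d d a ε * (f ε : ℚ) - wt d d b ε * (f ε : ℚ)
          = (if ε j then (1:ℚ)/d else -(1/d)) * Q ε * (f ε : ℚ) := by
      intro ε; rw [← sub_mul, hwd ε]
    rw [Finset.sum_congr rfl (fun ε _ => step1 ε)]
    rw [← Finset.sum_filter_add_sum_filter_not Finset.univ (fun ε => ε j = true)]
    have hTsum : ∑ ε ∈ T, (if ε j then (1:ℚ)/d else -(1/d)) * Q ε * (f ε : ℚ)
        = ∑ ε ∈ T, (1/d) * (Q ε * (f ε : ℚ)) := by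
      refine Finset.sum_congr rfl fun ε hε => ?_
      rw [hT, Finset.mem_filter] at hε
      rw [if_pos hε.2]; ring
    have hFsum : ∑ ε ∈ Finset.univ.filter (fun ε : Fin d → Bool => ¬ ε j = true),
          (if ε j then (1:ℚ)/d else -(1/d)) * Q ε * (f ε : ℚ)
        = ∑ ε ∈ T, -((1/d) * (Q ε * (f (Function.update ε j false) : ℚ))) := by
      refine Finset.sum_nbij' (fun ε => Function.update ε j true)
        (fun ε => Function.update ε j false) ?_ ?_ ?_ ?_ ?_
      · intro ε hε
        simp [hT]
      · intro ε hε
        simp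
      · intro ε hε
        simp only [Finset.mem_filter, Finset.mem_univ, true_and, Bool.not_eq_true] at hε
        funext i
        rcases eq_or_ne i j with rfl | hij
        · simp [hε]
        · simp [Function.update_of_ne hij]
      · intro ε hε
        rw [hT, Finset.mem_filter] at hε
        funext i
        rcases eq_or_ne i j with rfl | hij
        · simp [hε.2]
        · simp [Function.update_of_ne hij]
      · intro ε hε
        simp only [Finset.mem_filter, Finset.mem_univ, true_and, Bool.not_eq_true] at hε
        rw [hε, hQflip]
        have : Function.update (Function.update ε j true) j false = ε := by
          funext i
          rcases eq_or_ne i j with rfl | hij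
          · simp [hε]
          · simp [Function.update_of_ne hij]
        rw [this]
        simp only [Bool.false_eq_true, if_false]
        ring
    rw [hTsum, hFsum, Finset.mul_sum, ← Finset.sum_add_distrib]
    refine Finset.sum_congr rfl fun ε hε => ?_
    ring
  rw [hdiff, abs_mul]
  have h1d : |(1:ℚ)/d| = 1/d := abs_of_nonneg (by positivity)
  rw [h1d]
  have hbound : |∑ ε ∈ T, Q ε * ((f ε : ℚ) - (f (Function.update ε j false) : ℚ))|
      ≤ (d : ℚ) := by
    calc |∑ ε ∈ T, Q ε * ((f ε : ℚ) - (f (Function.update ε j false) : ℚ))|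
        ≤ ∑ ε ∈ T, |Q ε * ((f ε : ℚ) - (f (Function.update ε j false) : ℚ))| :=
          Finset.abs_sum_le_sum_abs _ _
      _ ≤ ∑ ε ∈ T, Q ε * 1 := by
          refine Finset.sum_le_sum fun ε hε => ?_
          rw [abs_mul, abs_of_nonneg (hQnn ε)]
          refine mul_le_mul_of_nonneg_left ?_ (hQnn ε)
          rw [hT, Finset.mem_filter] at hε
          have hadj : CubeAdj ε (Function.update ε j false) := by
            refine ⟨j, ?_, fun k hk => (Function.update_of_ne hk _ _).symm⟩
            rw [hε.2, Function.update_self]; simp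
          have := hf _ _ hadj
          rw [← Int.cast_sub, ← Int.cast_abs]
          exact_mod_cast this
      _ = 1 := by rw [← Finset.sum_mul, hQsum, one_mul]
      _ ≤ (d : ℚ) := by exact_mod_cast hd
  calc 1/(d:ℚ) * |∑ ε ∈ T, Q ε * ((f ε : ℚ) - (f (Function.update ε j false) : ℚ))|
      ≤ 1/(d:ℚ) * d := mul_le_mul_of_nonneg_left hbound (by positivity)
    _ = 1 := by field_simp

lemma vert_step (hd : 1 ≤ d) (f : (Fin d → Bool) → ℤ)
    (hf : ∀ u v : (Fin d → Bool), CubeAdj u v → |f u - f v| ≤ 1)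
    (a : Fin d → ℕ) (ha : ∀ i, a i ≤ d) {k l : ℕ} (h : k = l + 1) :
    |gammaLabel d f a k - gammaLabel d f a l| ≤ 1 := by
  have hd0 : (d : ℚ) ≠ 0 := by exact_mod_cast Nat.one_le_iff_ne_zero.mp hd
  have key : gammaLabel d f a k - gammaLabel d f a l
      = (1/d) * ((f (barMap a) : ℚ) - interp d d f a) := by
    subst h
    rw [gammaLabel, gammaLabel]
    push_cast
    field_simp
    ring
  rw [key, abs_mul, abs_sub_comm, abs_of_nonneg (show (0:ℚ) ≤ 1/d by positivity)]
  have hbar := interp_sub_bar hd f hf a ha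
  calc 1/(d:ℚ) * |interp d d f a - (f (barMap a) : ℚ)| ≤ 1/(d:ℚ) * d :=
        mul_le_mul_of_nonneg_left hbar (by positivity)
    _ = 1 := by field_simp

end GammaAux

/-- **Statement 11.** Adjacent points of the `(d+1)`-dimensional grid `{0,…,d}^{d+1}` have
`γ`-values differing by at most `1`. -/
theorem gammaLabel_step_le {d : ℕ} (hd : 1 ≤ d) (f : (Fin d → Bool) → ℤ)
    (hf : ∀ u v : Fin d → Bool, CubeAdj u v → |f u - f v| ≤ 1) :
    (∀ a b : Fin d → ℕ, ∀ k : ℕ, (∀ i, a i ≤ d) → (∀ i, b i ≤ d) → k ≤ d →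
      GridAdj a b → |gammaLabel d f a k - gammaLabel d f b k| ≤ 1) ∧
    (∀ a : Fin d → ℕ, ∀ k l : ℕ, (∀ i, a i ≤ d) → k ≤ d → l ≤ d →
      (k = l + 1 ∨ l = k + 1) → |gammaLabel d f a k - gammaLabel d f a l| ≤ 1) := by
  constructor
  · intro a b k ha hb hk hadj
    obtain ⟨j, hj, hother⟩ := hadj
    have hd0 : (0:ℚ) < d := by exact_mod_cast hd
    have hF : |interp d d f a - interp d d f b| ≤ 1 := by
      rcases hj with h | h
      · exact GammaAux.interp_lipschitz hd f hf ha hb j h hother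
      · rw [abs_sub_comm]
        exact GammaAux.interp_lipschitz hd f hf hb ha j h
          (fun i hi => (hother i hi).symm)
    have hB : |(f (barMap a) : ℚ) - (f (barMap b) : ℚ)| ≤ 1 := by
      have := GammaAux.bar_bound f hf j hother
      rw [← Int.cast_sub, ← Int.cast_abs]
      exact_mod_cast this
    set t : ℚ := (k : ℚ)/d with ht
    have h0 : 0 ≤ t := by positivity
    have h1 : t ≤ 1 := by rw [ht, div_le_one hd0]; exact_mod_cast hk
    have key : gammaLabel d f a k - gammaLabel d f b k
        = (1 - t) * (interp d d f a - interp d d f b)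
          + t * ((f (barMap a) : ℚ) - (f (barMap b) : ℚ)) := by
      rw [gammaLabel, gammaLabel]; ring
    rw [key]
    calc |(1 - t) * (interp d d f a - interp d d f b)
          + t * ((f (barMap a) : ℚ) - (f (barMap b) : ℚ))|
        ≤ |(1 - t) * (interp d d f a - interp d d f b)|
          + |t * ((f (barMap a) : ℚ) - (f (barMap b) : ℚ))| := abs_add_le _ _
      _ = (1 - t) * |interp d d f a - interp d d f b|
          + t * |(f (barMap a) : ℚ) - (f (barMap b) : ℚ)| := by
          rw [abs_mul, abs_mul, abs_of_nonneg (by linarith : (0:ℚ) ≤ 1 - t),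
            abs_of_nonneg h0]
      _ ≤ (1 - t) * 1 + t * 1 :=
          add_le_add (mul_le_mul_of_nonneg_left hF (by linarith))
            (mul_le_mul_of_nonneg_left hB h0)
      _ = 1 := by ring
  · intro a k l ha hk hl hkl
    rcases hkl with h | h
    · exact GammaAux.vert_step hd f hf a ha h
    · rw [abs_sub_comm]
      exact GammaAux.vert_step hd f hf a ha h
end
end
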